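/- Let S, B ⊆ ℝ^n be compact sets, let f : ℝ^n → ℝ^n be continuous with f(S) ⊆ B, and let μ₁ be a finite positive Borel measure on ℝ^n vanishing outside B. Then there exists a finite positive Borel measure μ₀ vanishing outside S such that f_#μ₀ = μ₁ if and only if there is no continuous function v : ℝ^n → ℝ such that v(f(x)) ≥ 0 for all x ∈ S and ∫ v dμ₁ < 0. -/

import Mathlib

open MeasureTheory Metric Filter Topology

namespace PullbackAux

variable {n : ℕ}

/-- Images under `f` of intersections of a compact set with open balls are Borel. -/
lemma measurableSet_image_inter_ball {S : Set (Fin n → ℝ)} (hS : IsCompact S)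
    {f : (Fin n → ℝ) → (Fin n → ℝ)} (hf : Continuous f) (c : Fin n → ℝ) (r : ℝ) :
    MeasurableSet (f '' (S ∩ ball c r)) := by
  have heq : f '' (S ∩ ball c r) = ⋃ m : ℕ, f '' (S ∩ closedBall c (r - 1 / (m + 1))) := by
    ext z
    simp only [Set.mem_iUnion, Set.mem_image, Set.mem_inter_iff, mem_ball, mem_closedBall]
    constructor
    · rintro ⟨w, ⟨hwS, hwb⟩, rfl⟩
      obtain ⟨m, hm⟩ := exists_nat_one_div_lt (show (0:ℝ) < r - dist w c by linarith)
      exact ⟨m, w, ⟨hwS, by push_cast at hm ⊢; linarith⟩, rfl⟩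
    · rintro ⟨m, w, ⟨hwS, hwb⟩, rfl⟩
      have h1 : 0 < 1 / ((m:ℝ) + 1) := by positivity
      exact ⟨w, ⟨hwS, by linarith⟩, rfl⟩
  rw [heq]
  exact MeasurableSet.iUnion fun m =>
    (((hS.inter_right Metric.isClosed_closedBall).image hf).isClosed).measurableSet

/-- `sInf` of a measurably-varying set of naturals is measurable. -/
lemma measurable_sInf_mem {α : Type*} [MeasurableSpace α] (A : ℕ → Set α)
    (hA : ∀ j, MeasurableSet (A j)) :
    Measurable fun y => sInf {j | y ∈ A j} := by
  apply measurable_to_countable'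
  intro m
  rcases Nat.eq_zero_or_pos m with rfl | hm
  · have heq : (fun y => sInf {j | y ∈ A j}) ⁻¹' {0} = A 0 ∪ ⋂ j, (A j)ᶜ := by
      ext y
      simp only [Set.mem_preimage, Set.mem_singleton_iff, Nat.sInf_eq_zero, Set.mem_union,
        Set.mem_iInter, Set.mem_compl_iff, Set.mem_setOf_eq]
      constructor
      · rintro (h | h)
        · exact Or.inl h
        · exact Or.inr fun j hj => (Set.eq_empty_iff_forall_notMem.1 h j) hj
      · rintro (h | h)
        · exact Or.inl h
        · exact Or.inr (Set.eq_empty_iff_forall_notMem.2 h)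
    rw [heq]
    exact (hA 0).union (MeasurableSet.iInter fun j => (hA j).compl)
  · have heq : (fun y => sInf {j | y ∈ A j}) ⁻¹' {m} =
        A m ∩ ⋂ i, ⋂ (_ : i < m), (A i)ᶜ := by
      ext y
      simp only [Set.mem_preimage, Set.mem_singleton_iff, Set.mem_inter_iff, Set.mem_iInter,
        Set.mem_compl_iff]
      constructor
      · intro h
        have hne : {j | y ∈ A j}.Nonempty := by
          by_contra hc
          rw [Set.not_nonempty_iff_eq_empty] at hc
          rw [hc, Nat.sInf_empty] at h
          omega
        refine ⟨h ▸ Nat.sInf_mem hne, fun i hi => Nat.notMem_of_lt_sInf (h ▸ hi)⟩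
      · rintro ⟨h1, h2⟩
        have le1 : sInf {j | y ∈ A j} ≤ m := Nat.sInf_le h1
        have ge1 : ¬ sInf {j | y ∈ A j} < m := fun hlt =>
          (h2 _ hlt) (Nat.sInf_mem (⟨m, h1⟩ : {j | y ∈ A j}.Nonempty))
        omega
    rw [heq]
    exact (hA m).inter (MeasurableSet.iInter fun i => MeasurableSet.iInter fun _ => (hA i).compl)

/-- candidate index sets at stage `k+1`. -/
def secA (S : Set (Fin n → ℝ)) (f : (Fin n → ℝ) → (Fin n → ℝ)) (x : ℕ → (Fin n → ℝ))
    (k : ℕ) (J : (Fin n → ℝ) → ℕ) (j : ℕ) : Set (Fin n → ℝ) :=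
  (f '' (S ∩ ball (x j) ((1/2 : ℝ) ^ (k+1)))) ∩
    (J ⁻¹' {i | dist (x j) (x i) < (1/2 : ℝ) ^ (k+1) + (1/2 : ℝ) ^ k})

open Classical in
/-- Greedy index selection along a dense sequence. -/
noncomputable def secJ (S : Set (Fin n → ℝ)) (f : (Fin n → ℝ) → (Fin n → ℝ))
    (x : ℕ → (Fin n → ℝ)) : ℕ → (Fin n → ℝ) → ℕ
  | 0 => fun y => sInf {j | y ∈ f '' (S ∩ ball (x j) ((1/2 : ℝ) ^ (0:ℕ)))}
  | (k+1) => fun y =>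
      if ∃ j, y ∈ secA S f x k (secJ S f x k) j then
        sInf {j | y ∈ secA S f x k (secJ S f x k) j}
      else secJ S f x k y

lemma secJ_measurable {S : Set (Fin n → ℝ)} (hS : IsCompact S)
    {f : (Fin n → ℝ) → (Fin n → ℝ)} (hf : Continuous f) (x : ℕ → (Fin n → ℝ)) :
    ∀ k, Measurable (secJ S f x k) := by
  intro k
  induction k with
  | zero =>
      exact measurable_sInf_mem _ fun j => measurableSet_image_inter_ball hS hf (x j) _
  | succ k ih =>
      have hA : ∀ j, MeasurableSet (secA S f x k (secJ S f x k) j) := fun j =>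
        (measurableSet_image_inter_ball hS hf (x j) _).inter
          (ih ((Set.to_countable _).measurableSet))
      classical
      have heq : secJ S f x (k+1) =
          (⋃ j, secA S f x k (secJ S f x k) j).piecewise
            (fun y => sInf {j | y ∈ secA S f x k (secJ S f x k) j}) (secJ S f x k) := by
        funext y
        by_cases h : ∃ j, y ∈ secA S f x k (secJ S f x k) j
        · rw [Set.piecewise_eq_of_mem _ _ _ (by simpa [Set.mem_iUnion] using h)]
          simp only [secJ]
          rw [if_pos h]
        · rw [Set.piecewise_eq_of_notMem _ _ _ (by simpa [Set.mem_iUnion] using h)]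
          simp only [secJ]
          rw [if_neg h]
      rw [heq]
      exact Measurable.piecewise (MeasurableSet.iUnion hA)
        (measurable_sInf_mem _ hA) ih

lemma secJ_spec {S : Set (Fin n → ℝ)} {f : (Fin n → ℝ) → (Fin n → ℝ)}
    {x : ℕ → (Fin n → ℝ)} (hx : DenseRange x) :
    ∀ k, ∀ y ∈ f '' S, y ∈ f '' (S ∩ ball (x (secJ S f x k y)) ((1/2 : ℝ) ^ k)) := by
  intro k
  induction k with
  | zero =>
      rintro y ⟨z, hzS, rfl⟩
      obtain ⟨j, hj⟩ := hx.exists_dist_lt z (show (0:ℝ) < (1/2 : ℝ) ^ (0:ℕ) by norm_num)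
      have hne : {j | f z ∈ f '' (S ∩ ball (x j) ((1/2 : ℝ) ^ (0:ℕ)))}.Nonempty :=
        ⟨j, ⟨z, ⟨hzS, mem_ball.2 hj⟩, rfl⟩⟩
      exact Nat.sInf_mem hne
  | succ k ih =>
      intro y hy
      obtain ⟨z, ⟨hzS, hzb⟩, hfz⟩ := ih y hy
      obtain ⟨j, hj⟩ := hx.exists_dist_lt z (show (0:ℝ) < (1/2 : ℝ) ^ (k+1) by positivity)
      have hjA : y ∈ secA S f x k (secJ S f x k) j := by
        refine ⟨⟨z, ⟨hzS, mem_ball.2 hj⟩, hfz⟩, ?_⟩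
        have h1 : dist (x j) z < (1/2 : ℝ) ^ (k+1) := by rwa [dist_comm] at hj
        have h2 : dist z (x (secJ S f x k y)) < (1/2 : ℝ) ^ k := mem_ball.1 hzb
        have := dist_triangle (x j) z (x (secJ S f x k y))
        simp only [Set.mem_preimage, Set.mem_setOf_eq]
        linarith
      have hne : {j | y ∈ secA S f x k (secJ S f x k) j}.Nonempty := ⟨j, hjA⟩
      have hmem := Nat.sInf_mem hne
      have hval : secJ S f x (k+1) y = sInf {j | y ∈ secA S f x k (secJ S f x k) j} := by
        simp only [secJ]
        rw [if_pos ⟨j, hjA⟩]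
      rw [hval]
      exact hmem.1

lemma secJ_dist (S : Set (Fin n → ℝ)) (f : (Fin n → ℝ) → (Fin n → ℝ))
    (x : ℕ → (Fin n → ℝ)) (k : ℕ) (y : Fin n → ℝ) :
    dist (x (secJ S f x (k+1) y)) (x (secJ S f x k y)) ≤ (3/2 : ℝ) * (1/2 : ℝ) ^ k := by
  by_cases h : ∃ j, y ∈ secA S f x k (secJ S f x k) j
  · have hval : secJ S f x (k+1) y = sInf {j | y ∈ secA S f x k (secJ S f x k) j} := by
      simp only [secJ]; rw [if_pos h]
    have hmem := Nat.sInf_mem (show {j | y ∈ secA S f x k (secJ S f x k) j}.Nonempty from h)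
    have h2 := hmem.2
    simp only [Set.mem_preimage, Set.mem_setOf_eq] at h2
    rw [hval]
    have hps : (1/2 : ℝ) ^ (k+1) = (1/2 : ℝ) ^ k * (1/2 : ℝ) := pow_succ _ _
    nlinarith [h2]
  · have hval : secJ S f x (k+1) y = secJ S f x k y := by
      simp only [secJ]; rw [if_neg h]
    rw [hval, dist_self]
    positivity

/-- A measurable section for a continuous map on a compact subset of `ℝⁿ`. -/
lemma exists_measurable_section (S : Set (Fin n → ℝ)) (hS : IsCompact S)
    (f : (Fin n → ℝ) → (Fin n → ℝ)) (hf : Continuous f) :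
    ∃ g : (Fin n → ℝ) → (Fin n → ℝ), Measurable g ∧
      ∀ y ∈ f '' S, g y ∈ S ∧ f (g y) = y := by
  rcases S.eq_empty_or_nonempty with rfl | hSne
  · exact ⟨id, measurable_id, by simp⟩
  obtain ⟨x, hx⟩ : ∃ x : ℕ → (Fin n → ℝ), DenseRange x :=
    ⟨TopologicalSpace.denseSeq _, TopologicalSpace.denseRange_denseSeq _⟩
  set u : ℕ → (Fin n → ℝ) → (Fin n → ℝ) := fun k y => x (secJ S f x k y) with hu
  have hcauchy : ∀ y, CauchySeq fun k => u k y := by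
    intro y
    refine cauchySeq_of_le_geometric (1/2 : ℝ) (3/2 : ℝ) (by norm_num) fun k => ?_
    rw [dist_comm]
    exact secJ_dist S f x k y
  choose g hg using fun y => cauchySeq_tendsto_of_complete (hcauchy y)
  have hgmeas : Measurable g := by
    refine measurable_of_tendsto_metrizable
      (f := fun k => u k) (fun k => ?_) ?_
    · exact (measurable_from_top).comp' ((secJ_measurable hS hf x k))
    · rw [tendsto_pi_nhds]; exact hg
  refine ⟨g, hgmeas, fun y hy => ?_⟩
  -- pick approximating points in the fiber
  have hz : ∀ k, ∃ z, z ∈ S ∧ dist z (u k y) < (1/2 : ℝ) ^ k ∧ f z = y := by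
    intro k
    obtain ⟨z, ⟨hzS, hzb⟩, hfz⟩ := secJ_spec hx k y hy
    exact ⟨z, hzS, mem_ball.1 hzb, hfz⟩
  choose z hzS hzd hzf using hz
  have hztend : Tendsto z atTop (𝓝 (g y)) := by
    rw [tendsto_iff_dist_tendsto_zero]
    have hb : ∀ k, dist (z k) (g y) ≤ (1/2 : ℝ) ^ k + dist (u k y) (g y) := fun k =>
      (dist_triangle (z k) (u k y) (g y)).trans (by have := hzd k; linarith)
    have h1 : Tendsto (fun k => (1/2 : ℝ) ^ k + dist (u k y) (g y)) atTop (𝓝 0) := by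
      have t1 : Tendsto (fun k => (1/2 : ℝ) ^ k) atTop (𝓝 0) := by
        apply tendsto_pow_atTop_nhds_zero_of_lt_one <;> norm_num
      have t2 : Tendsto (fun k => dist (u k y) (g y)) atTop (𝓝 0) :=
        (tendsto_iff_dist_tendsto_zero).1 (hg y)
      simpa using t1.add t2
    exact squeeze_zero (fun k => dist_nonneg) hb h1
  have hgS : g y ∈ S := hS.isClosed.mem_of_tendsto hztend (Eventually.of_forall hzS)
  have hfg : f (g y) = y := by
    have h1 : Tendsto (fun k => f (z k)) atTop (𝓝 (f (g y))) :=
      (hf.tendsto (g y)).comp hztend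
    have h2 : (fun k => f (z k)) = fun _ => y := funext hzf
    rw [h2] at h1
    exact (tendsto_const_nhds_iff.1 h1).symm
  exact ⟨hgS, hfg⟩

end PullbackAux

open PullbackAux

/-- Existence of a pullback measure: given compact sets `S`, `B` with `f(S) ⊆ B`
and a finite positive Borel measure `μ₁` vanishing outside `B`, there exists a
finite positive Borel measure `μ₀` vanishing outside `S` with `f_# μ₀ = μ₁` if and
only if there is no continuous `v` with `v ∘ f ≥ 0` on `S` and `∫ v dμ₁ < 0`. -/
theorem pullback_measure_iff (n : ℕ) (hn : 1 ≤ n)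
    (S B : Set (Fin n → ℝ)) (hS : IsCompact S) (hB : IsCompact B)
    (f : (Fin n → ℝ) → (Fin n → ℝ)) (hf : Continuous f) (hfSB : f '' S ⊆ B)
    (μ₁ : Measure (Fin n → ℝ)) [IsFiniteMeasure μ₁] (hμ₁ : μ₁ Bᶜ = 0) :
    (∃ μ₀ : Measure (Fin n → ℝ), IsFiniteMeasure μ₀ ∧ μ₀ Sᶜ = 0 ∧
        Measure.map f μ₀ = μ₁) ↔
      ¬ ∃ v : (Fin n → ℝ) → ℝ, Continuous v ∧ (∀ x ∈ S, 0 ≤ v (f x)) ∧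
          (∫ x, v x ∂μ₁) < 0 := by
  constructor
  · rintro ⟨μ₀, hfin, hμ₀S, hmap⟩ ⟨v, hv, hvS, hint⟩
    rw [← hmap] at hint
    rw [integral_map hf.measurable.aemeasurable hv.aestronglyMeasurable] at hint
    have hae : ∀ᵐ x ∂μ₀, x ∈ S := by
      rw [MeasureTheory.ae_iff]
      exact hμ₀S
    have : 0 ≤ ∫ x, v (f x) ∂μ₀ :=
      integral_nonneg_of_ae (by filter_upwards [hae] with x hx using hvS x hx)
    linarith
  · intro hno
    -- first: μ₁ vanishes outside f '' S
    have hT : μ₁ ((f '' S)ᶜ) = 0 := by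
      rcases S.eq_empty_or_nonempty with rfl | hSne
      · -- S empty: show μ₁ = 0
        by_contra hne
        have huniv : μ₁ Set.univ ≠ 0 := by
          rw [Set.image_empty, Set.compl_empty] at hne
          exact hne
        have hpos : 0 < (μ₁ Set.univ).toReal :=
          ENNReal.toReal_pos huniv (measure_ne_top μ₁ _)
        refine hno ⟨fun _ => (-1 : ℝ), continuous_const, by simp, ?_⟩
        rw [integral_const]
        simp only [smul_eq_mul, measureReal_def]
        nlinarith
      · by_contra hne
        set T := f '' S with hTdef
        have hTcpt : IsCompact T := hS.image hf
        have hTne : T.Nonempty := hSne.image f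
        set h : (Fin n → ℝ) → ℝ := fun y => infDist y T with hh
        have hhc : Continuous h := continuous_infDist_pt T
        have hhnn : ∀ y, 0 ≤ h y := fun y => infDist_nonneg
        -- integrability of h
        obtain ⟨C, hC⟩ := hB.exists_bound_of_continuousOn hhc.continuousOn
        have haeB : ∀ᵐ y ∂μ₁, y ∈ B := by rw [MeasureTheory.ae_iff]; exact hμ₁
        have hint : Integrable h μ₁ := by
          refine ⟨hhc.aestronglyMeasurable, ?_⟩
          refine HasFiniteIntegral.of_bounded (C := C) ?_
          filter_upwards [haeB] with y hy using hC y hy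
        -- ∫ h > 0
        have hige : 0 ≤ ∫ y, h y ∂μ₁ := integral_nonneg hhnn
        have hineq : ∫ y, h y ∂μ₁ ≠ 0 := by
          intro h0
          have := (integral_eq_zero_iff_of_nonneg hhnn hint).1 h0
          have hsub : Tᶜ ⊆ {y | h y ≠ 0} := by
            intro y hy
            have : 0 < h y := (hTcpt.isClosed.notMem_iff_infDist_pos hTne).1 hy
            exact ne_of_gt this
          have hnull : μ₁ {y | h y ≠ 0} = 0 := by
            have : (fun y => h y) =ᵐ[μ₁] 0 := this
            exact ae_iff.1 this
          exact hne (measure_mono_null hsub hnull)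
        refine hno ⟨fun y => -(h y), hhc.neg, fun x hx => ?_, ?_⟩
        · have : h (f x) = 0 := infDist_zero_of_mem ⟨x, hx, rfl⟩
          simp [this]
        · rw [integral_neg]
          have : 0 < ∫ y, h y ∂μ₁ := lt_of_le_of_ne hige (Ne.symm hineq)
          linarith
    -- construct the section and push forward
    obtain ⟨g, hgmeas, hgsec⟩ := exists_measurable_section S hS f hf
    refine ⟨Measure.map g μ₁, Measure.isFiniteMeasure_map μ₁ g, ?_, ?_⟩
    · rw [Measure.map_apply hgmeas hS.isClosed.measurableSet.compl]
      refine measure_mono_null ?_ hT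
      intro y hy
      simp only [Set.mem_preimage, Set.mem_compl_iff] at hy ⊢
      exact fun hyT => hy (hgsec y hyT).1
    · rw [Measure.map_map hf.measurable hgmeas]
      have hcong : (f ∘ g) =ᵐ[μ₁] id := by
        have haefS : ∀ᵐ y ∂μ₁, y ∈ f '' S := by
          rw [MeasureTheory.ae_iff]; exact hT
        filter_upwards [haefS] with y hy
        exact (hgsec y hy).2
      rw [Measure.map_congr hcong, Measure.map_id]
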